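/- Let {v_1,…,v_T} ⊂ S^{d-1} be an α-covering of the unit sphere in the angular metric, for 0 < α < π/2, i.e., for every unit vector v there exists v_i with ⟨v, v_i⟩ ≥ cos α. Suppose x, y ∈ ℝ^d and r_1,…,r_T ∈ ℝ satisfy |⟨x, v_i⟩ - r_i| ≤ δ and |⟨y, v_i⟩ - r_i| ≤ δ for all i. Then ‖x - y‖ ≤ 2δ/cos α. -/
import Mathlib


open RealInnerProductSpace Real

theorem diam_from_angular_cover
    (d T : ℕ) (δ α : ℝ) (hδ : 0 < δ) (hα : 0 < α) (hα2 : α < π / 2)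
    (v : Fin T → EuclideanSpace ℝ (Fin d))
    (hunit : ∀ i, ‖v i‖ = 1)
    (hcover : ∀ u : EuclideanSpace ℝ (Fin d), ‖u‖ = 1 → ∃ i, Real.cos α ≤ ⟪u, v i⟫)
    (x y : EuclideanSpace ℝ (Fin d)) (r : Fin T → ℝ)
    (hx : ∀ i, |⟪x, v i⟫ - r i| ≤ δ)
    (hy : ∀ i, |⟪y, v i⟫ - r i| ≤ δ) :
    ‖x - y‖ ≤ 2 * δ / Real.cos α := by
  have hcos : 0 < Real.cos α := Real.cos_pos_of_mem_Ioo ⟨by linarith [Real.pi_pos], hα2⟩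
  by_cases hxy : x = y
  · subst hxy
    simp only [sub_self, norm_zero]
    positivity
  · have hne : ‖x - y‖ ≠ 0 := by simpa [sub_eq_zero] using hxy
    have hpos : 0 < ‖x - y‖ := lt_of_le_of_ne (norm_nonneg _) (Ne.symm hne)
    set u : EuclideanSpace ℝ (Fin d) := ‖x - y‖⁻¹ • (x - y) with hu
    have hun : ‖u‖ = 1 := by
      rw [hu, norm_smul, norm_inv, norm_norm, inv_mul_cancel₀ hne]
    obtain ⟨i, hi⟩ := hcover u hun
    have hinner : ⟪x - y, v i⟫ ≤ 2 * δ := by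
      have h1 := hx i
      have h2 := hy i
      have : ⟪x - y, v i⟫ = (⟪x, v i⟫ - r i) - (⟪y, v i⟫ - r i) := by
        rw [inner_sub_left]; ring
      rw [this]
      have := abs_le.mp h1
      have := abs_le.mp h2
      linarith [ (abs_le.mp h1).2, (abs_le.mp h2).1 ]
    have hiu : ⟪u, v i⟫ = ‖x - y‖⁻¹ * ⟪x - y, v i⟫ := by
      rw [hu, real_inner_smul_left]
    have key : ‖x - y‖ * Real.cos α ≤ 2 * δ := by
      have : ‖x - y‖ * Real.cos α ≤ ‖x - y‖ * ⟪u, v i⟫ :=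
        mul_le_mul_of_nonneg_left hi (norm_nonneg _)
      rw [hiu, ← mul_assoc, mul_inv_cancel₀ hne, one_mul] at this
      linarith
    rw [le_div_iff₀ hcos]
    exact key
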